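/- In the category rPres of reflexive presentations, a morphism belongs to llp(rlp(I)) if and only if its underlying function on generators is injective; equivalently, the cofibrations generated by I are exactly the monomorphisms of rPres. -/

import Mathlib

/-- A presentation of a monoid: a type of generators and a set of relations
between words (elements of the free monoid) over the generators. -/
structure MonPres : Type 1 where
  gen : Type
  rel : Set (FreeMonoid gen × FreeMonoid gen)

namespace MonPres

/-- The congruence on the free monoid generated by the relations. -/
def con (P : MonPres) : Con (FreeMonoid P.gen) :=
  conGen fun u v => (u, v) ∈ P.rel

/-- The monoid presented by a presentation. -/
abbrev Presented (P : MonPres) : Type := P.con.Quotient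

end MonPres

/-- A morphism of presentations. -/
structure MonPresHom (P Q : MonPres) where
  toFun : P.gen → Q.gen
  map_rel : ∀ p ∈ P.rel,
    (FreeMonoid.map toFun p.1, FreeMonoid.map toFun p.2) ∈ Q.rel

namespace MonPresHom

/-- The monoid homomorphism induced on presented monoids. -/
def induced {P Q : MonPres} (f : MonPresHom P Q) : P.Presented →* Q.Presented :=
  Con.lift P.con ((Con.mk' Q.con).comp (FreeMonoid.map f.toFun)) (by
    refine Con.conGen_le.mpr ?_
    intro x y hxy
    simp only [Con.ker_rel, MonoidHom.comp_apply, Con.coe_mk']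
    exact (Con.eq _).mpr (ConGen.Rel.of _ _ (f.map_rel (x, y) hxy)))

/-- Identity morphism of presentations. -/
def id (P : MonPres) : MonPresHom P P where
  toFun := _root_.id
  map_rel := by intro p hp; simpa using hp

/-- Composition of morphisms of presentations. -/
def comp {P Q R : MonPres} (g : MonPresHom Q R) (f : MonPresHom P Q) :
    MonPresHom P R where
  toFun := g.toFun ∘ f.toFun
  map_rel := by
    intro p hp
    have h := g.map_rel _ (f.map_rel p hp)
    simpa [FreeMonoid.map_comp] using h

end MonPresHom

/-- The standard presentation of a monoid `M`: generators are the elements of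
`M`, and relations are all pairs of words whose products in `M` coincide. -/
def stdPres (M : Type) [Monoid M] : MonPres where
  gen := M
  rel := {p | FreeMonoid.lift (id : M → M) p.1 = FreeMonoid.lift (id : M → M) p.2}
open CategoryTheory

/-- A reflexive presentation: every word is related to itself. -/
structure RPres : Type 1 where
  pres : MonPres
  refl : ∀ u : FreeMonoid pres.gen, (u, u) ∈ pres.rel

/-- The category of reflexive presentations and morphisms of presentations. -/
instance : Category RPres where
  Hom P Q := MonPresHom P.pres Q.pres
  id P := MonPresHom.id P.pres
  comp f g := g.comp f
  id_comp _ := rfl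
  comp_id _ := rfl
  assoc _ _ _ := rfl

/-- The reflexive presentation on a type of generators with no relations
besides the reflexivity ones. -/
def rpresDiag (α : Type) : RPres :=
  ⟨⟨α, Set.diagonal _⟩, fun _ => rfl⟩

/-- The word `a₁ … a_m` in the free monoid on `Fin (m + n)`. -/
def leftWord (m n : ℕ) : FreeMonoid (Fin (m + n)) :=
  FreeMonoid.ofList (List.ofFn fun i : Fin m => Fin.castAdd n i)

/-- The word `a_{m+1} … a_{m+n}` in the free monoid on `Fin (m + n)`. -/
def rightWord (m n : ℕ) : FreeMonoid (Fin (m + n)) :=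
  FreeMonoid.ofList (List.ofFn fun i : Fin n => Fin.natAdd m i)

/-- The reflexive presentation on `m + n` generators with one extra relation
`a₁ … a_m → a_{m+1} … a_{m+n}`. -/
def rpresRel (m n : ℕ) : RPres :=
  ⟨⟨Fin (m + n), insert (leftWord m n, rightWord m n) (Set.diagonal _)⟩,
    fun _ => Set.mem_insert_iff.mpr (Or.inr rfl)⟩

/-- The generating cofibration `∅ → ⟨a | ⟩`. -/
def iGen : rpresDiag Empty ⟶ rpresDiag PUnit where
  toFun := fun x => x.elim
  map_rel := by rintro ⟨u, v⟩ (h : u = v); subst h; exact rfl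

/-- The generating cofibration `⟨a₁,…,a_{m+n} | ⟩ → R^{m,n}`. -/
def iRel (m n : ℕ) : rpresDiag (Fin (m + n)) ⟶ rpresRel m n where
  toFun := _root_.id
  map_rel := by
    rintro ⟨u, v⟩ (h : u = v); subst h
    exact Set.mem_insert_iff.mpr (Or.inr rfl)

/-- The class `I` of generating cofibrations. -/
inductive IClass : ∀ ⦃X Y : RPres⦄, (X ⟶ Y) → Prop
  | g : IClass iGen
  | r (m n : ℕ) : IClass (iRel m n)

/-- The class `rlp(I)` of trivial fibrations. -/
def RlpI : MorphismProperty RPres := fun _ _ p =>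
  ∀ ⦃A B : RPres⦄ (i : A ⟶ B), IClass i → HasLiftingProperty i p

/-- The class `llp(rlp(I))` of cofibrations. -/
def Cofib : MorphismProperty RPres := fun _ _ f =>
  ∀ ⦃X Y : RPres⦄ (p : X ⟶ Y), RlpI p → HasLiftingProperty f p

section Aux

open CategoryTheory

theorem MonPresHom.ext' {P Q : MonPres} {f g : MonPresHom P Q}
    (h : f.toFun = g.toFun) : f = g := by
  cases f; cases g; cases h; rfl

@[simp] theorem comp_toFun {P Q R : RPres} (f : P ⟶ Q) (g : Q ⟶ R) :
    (f ≫ g).toFun = g.toFun ∘ f.toFun := rfl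

/-- `p` reflects relations. -/
def Reflects {X Y : RPres} (p : X ⟶ Y) : Prop :=
  ∀ u v : FreeMonoid X.pres.gen,
    (FreeMonoid.map p.toFun u, FreeMonoid.map p.toFun v) ∈ Y.pres.rel →
      (u, v) ∈ X.pres.rel

theorem map_leftWord {α : Type} (u v : List α) :
    FreeMonoid.map (fun i : Fin (u.length + v.length) =>
        (u ++ v)[i.val]'(by simpa using i.isLt)) (leftWord u.length v.length) =
      FreeMonoid.ofList u := by
  show FreeMonoid.ofList (List.map _ (List.ofFn _)) = _
  rw [List.map_ofFn]
  congr 1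
  refine List.ext_getElem (by simp) fun i h1 h2 => ?_
  simp [List.getElem_append_left h2]

theorem map_rightWord {α : Type} (u v : List α) :
    FreeMonoid.map (fun i : Fin (u.length + v.length) =>
        (u ++ v)[i.val]'(by simpa using i.isLt)) (rightWord u.length v.length) =
      FreeMonoid.ofList v := by
  show FreeMonoid.ofList (List.map _ (List.ofFn _)) = _
  rw [List.map_ofFn]
  congr 1
  refine List.ext_getElem (by simp) fun i h1 h2 => ?_
  simp [List.getElem_append_right]

/-- The diagonal-to-anything morphism. -/
def diagHom {α : Type} (X : RPres) (w : α → X.pres.gen) : rpresDiag α ⟶ X where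
  toFun := w
  map_rel := by rintro ⟨a, b⟩ (h : a = b); subst h; exact X.refl _

theorem surj_of_rlp {X Y : RPres} (p : X ⟶ Y) (hp : RlpI p) :
    Function.Surjective (MonPresHom.toFun p) := by
  intro y
  have hlift := hp iGen IClass.g
  have sq : CommSq (diagHom X (fun x => x.elim)) iGen p (diagHom Y (fun _ => y)) :=
    ⟨MonPresHom.ext' (funext fun x => x.elim)⟩
  obtain ⟨⟨l, _, h2⟩⟩ := (hlift.sq_hasLift sq).exists_lift
  exact ⟨l.toFun PUnit.unit, congrFun (congrArg MonPresHom.toFun h2) PUnit.unit⟩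

theorem reflects_of_rlp {X Y : RPres} (p : X ⟶ Y) (hp : RlpI p) : Reflects p := by
  intro u v huv
  set m := u.toList.length with hm
  set n := v.toList.length with hn
  have hlift := hp (iRel m n) (IClass.r m n)
  set w : Fin (m + n) → X.pres.gen := fun i =>
    (u.toList ++ v.toList)[i.val]'(by rw [List.length_append]; exact i.isLt) with hwdef
  have hu : FreeMonoid.map w (leftWord m n) = u := map_leftWord u.toList v.toList
  have hv : FreeMonoid.map w (rightWord m n) = v := map_rightWord u.toList v.toList
  have hg : ∀ q ∈ (rpresRel m n).pres.rel,
      (FreeMonoid.map (p.toFun ∘ w) q.1, FreeMonoid.map (p.toFun ∘ w) q.2)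
        ∈ Y.pres.rel := by
    rintro ⟨a, b⟩ hq
    rcases hq with hq | (hq : a = b)
    · obtain ⟨h1, h2⟩ := Prod.mk.injEq .. ▸ hq
      subst h1; subst h2
      simpa [FreeMonoid.map_comp, hu, hv] using huv
    · subst hq; exact Y.refl _
  set g : rpresRel m n ⟶ Y := ⟨p.toFun ∘ w, hg⟩ with hgdef
  have sq : CommSq (diagHom X w) (iRel m n) p g := ⟨MonPresHom.ext' rfl⟩
  obtain ⟨⟨l, h1, _⟩⟩ := (hlift.sq_hasLift sq).exists_lift
  have hl : l.toFun = w := congrArg MonPresHom.toFun h1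
  have := l.map_rel (leftWord m n, rightWord m n) (Set.mem_insert _ _)
  rw [hl] at this
  have this' : (FreeMonoid.map w (leftWord m n), FreeMonoid.map w (rightWord m n))
      ∈ X.pres.rel := this
  rwa [hu, hv] at this'

theorem cofib_of_inj {P Q : RPres} (f : P ⟶ Q)
    (hf : Function.Injective (MonPresHom.toFun f)) : Cofib f := by
  intro X Y p hp
  have hsurj := surj_of_rlp p hp
  have hrefl := reflects_of_rlp p hp
  constructor
  intro top bot sq
  classical
  set h : Q.pres.gen → X.pres.gen := fun q =>
    if hq : ∃ a, f.toFun a = q then top.toFun hq.choose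
    else (hsurj (bot.toFun q)).choose with hhdef
  have hcomm : ∀ q, p.toFun (h q) = bot.toFun q := by
    intro q
    by_cases hq : ∃ a, f.toFun a = q
    · simp only [hhdef, dif_pos hq]
      have := congrFun (congrArg MonPresHom.toFun sq.w) hq.choose
      simp only [comp_toFun, Function.comp] at this
      rw [this, hq.choose_spec]
    · simp only [hhdef, dif_neg hq]
      exact (hsurj (bot.toFun q)).choose_spec
  have hpc : p.toFun ∘ h = bot.toFun := funext hcomm
  have hmr : ∀ q ∈ Q.pres.rel,
      (FreeMonoid.map h q.1, FreeMonoid.map h q.2) ∈ X.pres.rel := by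
    rintro ⟨a, b⟩ hq
    refine hrefl _ _ ?_
    have : (FreeMonoid.map bot.toFun a, FreeMonoid.map bot.toFun b) ∈ Y.pres.rel :=
      bot.map_rel _ hq
    rwa [← hpc, show FreeMonoid.map (p.toFun ∘ h) = (FreeMonoid.map p.toFun).comp
      (FreeMonoid.map h) from FreeMonoid.map_comp .., MonoidHom.comp_apply,
      MonoidHom.comp_apply] at this
  refine ⟨⟨⟨⟨h, hmr⟩, ?_, MonPresHom.ext' hpc⟩⟩⟩
  refine MonPresHom.ext' (funext fun a => ?_)
  show h (f.toFun a) = top.toFun a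
  have hq : ∃ a', f.toFun a' = f.toFun a := ⟨a, rfl⟩
  simp only [hhdef, dif_pos hq]
  exact congrArg top.toFun (hf hq.choose_spec)

/-- The chaotic reflexive presentation on a type. -/
def rpresChaos (α : Type) : RPres := ⟨⟨α, Set.univ⟩, fun _ => trivial⟩

theorem inj_of_cofib {P Q : RPres} (f : P ⟶ Q) (hf : Cofib f) :
    Function.Injective (MonPresHom.toFun f) := by
  set X := rpresChaos (Option P.pres.gen)
  set Y := rpresChaos PUnit
  set p : X ⟶ Y := ⟨fun _ => PUnit.unit, fun _ _ => trivial⟩ with hpdef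
  have hp : RlpI p := by
    intro A B i hi
    cases hi with
    | g =>
      constructor
      intro top bot sq
      refine ⟨⟨⟨⟨fun _ => none, fun _ _ => trivial⟩,
        MonPresHom.ext' (funext fun x => x.elim), MonPresHom.ext' (funext fun _ => rfl)⟩⟩⟩
    | r m n =>
      constructor
      intro top bot sq
      refine ⟨⟨⟨⟨top.toFun, fun _ _ => trivial⟩,
        MonPresHom.ext' rfl, MonPresHom.ext' (funext fun _ => rfl)⟩⟩⟩
  have hlift := hf p hp
  set top : P ⟶ X := ⟨fun a => some a, fun _ _ => trivial⟩ with htdef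
  set bot : Q ⟶ Y := ⟨fun _ => PUnit.unit, fun _ _ => trivial⟩ with hbdef
  have sq : CommSq top f p bot := ⟨MonPresHom.ext' rfl⟩
  obtain ⟨⟨l, h1, _⟩⟩ := (hlift.sq_hasLift sq).exists_lift
  intro a b hab
  have := congrFun (congrArg MonPresHom.toFun h1)
  simp only [comp_toFun, Function.comp] at this
  have ha := this a
  have hb := this b
  rw [hab] at ha
  exact Option.some_injective _ (ha.symm.trans hb)

end Aux

/-- in the category of reflexive presentations, a morphism is in
`llp(rlp(I))` iff its underlying function on generators is injective;
equivalently, the cofibrations generated by `I` are exactly the monomorphisms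
of the category. -/
theorem stmt13 {P Q : RPres} (f : P ⟶ Q) :
    (Cofib f ↔ Function.Injective (MonPresHom.toFun f)) ∧
    (Cofib f ↔ Mono f) := by
  have h1 : Cofib f ↔ Function.Injective (MonPresHom.toFun f) :=
    ⟨inj_of_cofib f, cofib_of_inj f⟩
  refine ⟨h1, h1.trans ⟨fun hf => ?_, fun hf => ?_⟩⟩
  · constructor
    intro Z g₁ g₂ hg
    refine MonPresHom.ext' (funext fun z => hf ?_)
    exact congrFun (congrArg MonPresHom.toFun hg) z
  · intro a b hab
    have hg : (diagHom P (fun _ => a) : rpresDiag PUnit ⟶ P) ≫ f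
        = (diagHom P (fun _ => b)) ≫ f :=
      MonPresHom.ext' (funext fun _ => hab)
    have := hf.right_cancellation _ _ hg
    exact congrFun (congrArg MonPresHom.toFun this) PUnit.unit
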